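/- Define F : ℝ → ℝ by F(u) = (1/2)(u − sin u)². Then inf F = 0, yet F does not satisfy the PL condition: there is no μ > 0 such that (F′(u))² ≥ 2μ(F(u) − inf F) holds for all u ∈ ℝ. In particular, F′(u) = (u − sin u)(1 − cos u), so F′(2π) = 0 while F(2π) = 2π² > 0. -/

import Mathlib

/-- The nested bilevel objective `F(u) = ½(u - sin u)²` of Example 1. -/
noncomputable def FEx1 : ℝ → ℝ := fun u => 1 / 2 * (u - Real.sin u) ^ 2

lemma FEx1_deriv (u : ℝ) : deriv FEx1 u = (u - Real.sin u) * (1 - Real.cos u) := by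
  have h : HasDerivAt FEx1 ((u - Real.sin u) * (1 - Real.cos u)) u := by
    have : HasDerivAt (fun u : ℝ => 1 / 2 * (u - Real.sin u) ^ 2)
        (1 / 2 * (2 * (u - Real.sin u) ^ 1 * (1 - Real.cos u))) u := by
      exact (((hasDerivAt_id u).sub (Real.hasDerivAt_sin u)).pow 2).const_mul (1/2)
    convert this using 1
    · rfl
    ring
  exact h.deriv

lemma FEx1_nonneg (u : ℝ) : 0 ≤ FEx1 u := by unfold FEx1; positivity

lemma FEx1_inf : (⨅ u : ℝ, FEx1 u) = 0 := by
  apply le_antisymm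
  · have h := ciInf_le (f := FEx1) ⟨0, by rintro x ⟨u, rfl⟩; exact FEx1_nonneg u⟩ 0
    calc (⨅ u : ℝ, FEx1 u) ≤ FEx1 0 := h
    _ = 0 := by simp [FEx1]
  · exact le_ciInf FEx1_nonneg

theorem stmt_4 :
    (⨅ u : ℝ, FEx1 u) = 0 ∧
    (∀ u : ℝ, deriv FEx1 u = (u - Real.sin u) * (1 - Real.cos u)) ∧
    deriv FEx1 (2 * Real.pi) = 0 ∧
    FEx1 (2 * Real.pi) = 2 * Real.pi ^ 2 ∧
    0 < FEx1 (2 * Real.pi) ∧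
    ¬ ∃ μ : ℝ, 0 < μ ∧ ∀ u : ℝ,
      2 * μ * (FEx1 u - ⨅ u' : ℝ, FEx1 u') ≤ (deriv FEx1 u) ^ 2 := by
  have hd0 : deriv FEx1 (2 * Real.pi) = 0 := by
    rw [FEx1_deriv]; simp
  have hF : FEx1 (2 * Real.pi) = 2 * Real.pi ^ 2 := by
    simp [FEx1]; ring
  have hpi := Real.pi_pos
  refine ⟨FEx1_inf, FEx1_deriv, hd0, hF, by rw [hF]; positivity, ?_⟩
  rintro ⟨μ, hμ, h⟩
  have := h (2 * Real.pi)
  rw [FEx1_inf, hd0, hF] at this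
  nlinarith [mul_pos hμ (mul_pos hpi hpi)]
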